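/- Let σ > 0, integer d ≥ 1, and positive reals r_11,…,r_nn with min_i r_ii ≥ 2σ·r(√(2π)/(2d)). Let γ = (∏_{i=1}^n r_ii)^{1/n}. Then ∏_{i=1}^n [1/(d+1) + (d/(d+1))·φ_σ(r_ii)] ≤ [1/(d+1) + (d/(d+1))·φ_σ(γ)]^n, with equality if and only if r_11 = ⋯ = r_nn = γ. -/

import Mathlib

noncomputable def phi (σ ζ : ℝ) : ℝ :=
  (2 / Real.sqrt (2 * Real.pi)) * ∫ t in (0:ℝ)..(ζ / (2 * σ)), Real.exp (-t ^ 2 / 2)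

noncomputable def f (ζ α : ℝ) : ℝ :=
  (1 - ζ ^ 2) * (α + ∫ t in (0:ℝ)..ζ, Real.exp (-t ^ 2 / 2)) - ζ * Real.exp (-ζ ^ 2 / 2)

noncomputable def G (y : ℝ) : ℝ := ∫ t in (0:ℝ)..y, Real.exp (-t ^ 2 / 2)

lemma contK : Continuous (fun t : ℝ => Real.exp (-t ^ 2 / 2)) := by
  fun_prop

lemma G_hasDeriv (y : ℝ) : HasDerivAt G (Real.exp (-y ^ 2 / 2)) y :=
  (contK.integral_hasStrictDerivAt 0 y).hasDerivAt

lemma G_nonneg {y : ℝ} (hy : 0 ≤ y) : 0 ≤ G y :=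
  intervalIntegral.integral_nonneg hy (fun t _ => (Real.exp_pos _).le)

lemma f_eq (ζ α : ℝ) : f ζ α = (1 - ζ ^ 2) * (α + G ζ) - ζ * Real.exp (-ζ ^ 2 / 2) := rfl

lemma idexp_hasDeriv (z : ℝ) :
    HasDerivAt (fun z : ℝ => z * Real.exp (-z ^ 2 / 2))
      ((1 - z ^ 2) * Real.exp (-z ^ 2 / 2)) z := by
  have h1 : HasDerivAt (fun z : ℝ => -z ^ 2 / 2) (-z) z := by
    have := ((hasDerivAt_pow 2 z).neg.div_const 2)
    refine this.congr_deriv ?_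
    ring
  have := (hasDerivAt_id z).mul (h1.exp)
  refine this.congr_deriv ?_
  simp only [id]
  ring

lemma f_hasDeriv (α ζ : ℝ) :
    HasDerivAt (fun z => f z α) (-2 * ζ * (α + G ζ)) ζ := by
  have h1 : HasDerivAt (fun z : ℝ => 1 - z ^ 2) (-(2 * ζ)) ζ := by
    simpa using ((hasDerivAt_pow 2 ζ).const_sub 1)
  have h2 : HasDerivAt (fun z => α + G z) (Real.exp (-ζ ^ 2 / 2)) ζ :=
    (G_hasDeriv ζ).const_add α
  have h3 := (h1.mul h2).sub (idexp_hasDeriv ζ)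
  refine h3.congr_deriv ?_
  ring

lemma f_neg {α : ℝ} (hα : 0 < α) {ra y : ℝ} (h0 : 0 ≤ ra) (hz : f ra α = 0)
    (hy : ra < y) : f y α < 0 := by
  have hanti : StrictAntiOn (fun z => f z α) (Set.Ici 0) := by
    apply strictAntiOn_of_deriv_neg (convex_Ici 0)
    · exact fun x _ => (f_hasDeriv α x).differentiableAt.continuousAt.continuousWithinAt
    · intro x hx
      rw [interior_Ici, Set.mem_Ioi] at hx
      rw [(f_hasDeriv α x).deriv]
      have hG : 0 ≤ G x := G_nonneg hx.le
      nlinarith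
  have := hanti h0 (h0.trans hy.le) hy
  simpa [hz] using this

noncomputable def F (σ α x : ℝ) : ℝ := Real.log (α + G (Real.exp x / (2 * σ)))

noncomputable def F' (σ α x : ℝ) : ℝ :=
  Real.exp x / (2 * σ) * Real.exp (-(Real.exp x / (2 * σ)) ^ 2 / 2)
    / (α + G (Real.exp x / (2 * σ)))

lemma P_pos {σ α : ℝ} (hσ : 0 < σ) (hα : 0 < α) (x : ℝ) :
    0 < α + G (Real.exp x / (2 * σ)) := by
  have : 0 ≤ G (Real.exp x / (2 * σ)) :=
    G_nonneg (by positivity)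
  linarith

lemma u_hasDeriv (σ x : ℝ) :
    HasDerivAt (fun x : ℝ => Real.exp x / (2 * σ)) (Real.exp x / (2 * σ)) x :=
  (Real.hasDerivAt_exp x).div_const _

lemma P_hasDeriv (σ α x : ℝ) :
    HasDerivAt (fun x => α + G (Real.exp x / (2 * σ)))
      (Real.exp (-(Real.exp x / (2 * σ)) ^ 2 / 2) * (Real.exp x / (2 * σ))) x :=
  by have := (((G_hasDeriv (Real.exp x / (2 * σ))).comp x (u_hasDeriv σ x)).const_add α); exact this

lemma F_hasDeriv {σ α : ℝ} (hσ : 0 < σ) (hα : 0 < α) (x : ℝ) :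
    HasDerivAt (F σ α) (F' σ α x) x := by
  have h := (P_hasDeriv σ α x).log (P_pos hσ hα x).ne'
  refine h.congr_deriv ?_
  unfold F'
  ring

lemma F'_hasDeriv {σ α : ℝ} (hσ : 0 < σ) (hα : 0 < α) (x : ℝ) :
    HasDerivAt (F' σ α)
      (Real.exp x / (2 * σ) * Real.exp (-(Real.exp x / (2 * σ)) ^ 2 / 2)
        * f (Real.exp x / (2 * σ)) α / (α + G (Real.exp x / (2 * σ))) ^ 2) x := by
  set u := Real.exp x / (2 * σ) with hu
  have hN : HasDerivAt (fun x => Real.exp x / (2 * σ) * Real.exp (-(Real.exp x / (2 * σ)) ^ 2 / 2))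
      ((1 - u ^ 2) * Real.exp (-u ^ 2 / 2) * u) x :=
    by have := (idexp_hasDeriv u).comp x (u_hasDeriv σ x); exact this
  have h := hN.div (P_hasDeriv σ α x) (P_pos hσ hα x).ne'
  rw [f_eq]
  refine h.congr_deriv ?_
  ring

lemma F_strictConcave {σ α ra : ℝ} (hσ : 0 < σ) (hα : 0 < α) (hra : 0 < ra)
    (hz : f ra α = 0) :
    StrictConcaveOn ℝ (Set.Ici (Real.log (2 * σ * ra))) (F σ α) := by
  apply strictConcaveOn_of_deriv2_neg (convex_Ici _)
  · exact fun x _ => (F_hasDeriv hσ hα x).differentiableAt.continuousAt.continuousWithinAt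
  · intro x hx
    rw [interior_Ici, Set.mem_Ioi] at hx
    have hderiv : deriv (F σ α) = F' σ α := funext fun y => (F_hasDeriv hσ hα y).deriv
    have : deriv^[2] (F σ α) x = deriv (F' σ α) x := by
      simp [Function.iterate_succ, hderiv]
    rw [this, (F'_hasDeriv hσ hα x).deriv]
    have hu : ra < Real.exp x / (2 * σ) := by
      rw [lt_div_iff₀ (by positivity)]
      calc ra * (2 * σ) = 2 * σ * ra := by ring
        _ < Real.exp x := by
          rw [← Real.exp_log (by positivity : (0:ℝ) < 2 * σ * ra)]
          exact Real.exp_lt_exp.mpr hx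
    have hfneg : f (Real.exp x / (2 * σ)) α < 0 := f_neg hα hra.le hz hu
    have h1 : 0 < Real.exp x / (2 * σ) := by positivity
    have h2 : 0 < Real.exp (-(Real.exp x / (2 * σ)) ^ 2 / 2) := Real.exp_pos _
    have h3 : 0 < (α + G (Real.exp x / (2 * σ))) ^ 2 := pow_pos (P_pos hσ hα x) 2
    apply div_neg_of_neg_of_pos _ h3
    exact mul_neg_of_pos_of_neg (mul_pos h1 h2) hfneg

lemma psi_eq {σ : ℝ} (hσ : 0 < σ) (d : ℕ) (hd : 1 ≤ d) {ζ : ℝ} (hζ : 0 < ζ) :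
    1 / ((d : ℝ) + 1) + (d : ℝ) / ((d : ℝ) + 1) * phi σ ζ =
      ((d : ℝ) / ((d : ℝ) + 1) * (2 / Real.sqrt (2 * Real.pi))) *
        Real.exp (F σ (Real.sqrt (2 * Real.pi) / (2 * (d : ℝ))) (Real.log ζ)) := by
  have hs : (0:ℝ) < Real.sqrt (2 * Real.pi) := Real.sqrt_pos.mpr (by positivity)
  have hd0 : (0:ℝ) < (d : ℝ) := by exact_mod_cast Nat.lt_of_lt_of_le Nat.zero_lt_one hd
  have hα : 0 < Real.sqrt (2 * Real.pi) / (2 * (d : ℝ)) := by positivity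
  rw [F, Real.exp_log (P_pos hσ hα _), Real.exp_log hζ]
  have hGdef : phi σ ζ = (2 / Real.sqrt (2 * Real.pi)) * G (ζ / (2 * σ)) := rfl
  rw [hGdef]
  field_simp

theorem stmt16 (n : ℕ) (hn : 0 < n) (σ : ℝ) (hσ : 0 < σ) (d : ℕ) (hd : 1 ≤ d)
    (r : Fin n → ℝ) (hr : ∀ i, 0 < r i)
    (rα : ℝ) (hr0 : 0 ≤ rα) (hrz : f rα (Real.sqrt (2 * Real.pi) / (2 * d)) = 0)
    (hmin : ∀ i, 2 * σ * rα ≤ r i) :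
    ∏ i, (1 / ((d : ℝ) + 1) + (d : ℝ) / ((d : ℝ) + 1) * phi σ (r i)) ≤
      (1 / ((d : ℝ) + 1) +
        (d : ℝ) / ((d : ℝ) + 1) * phi σ ((∏ i, r i) ^ ((1 : ℝ) / n))) ^ n ∧
    ((∏ i, (1 / ((d : ℝ) + 1) + (d : ℝ) / ((d : ℝ) + 1) * phi σ (r i)) =
        (1 / ((d : ℝ) + 1) +
          (d : ℝ) / ((d : ℝ) + 1) * phi σ ((∏ i, r i) ^ ((1 : ℝ) / n))) ^ n) ↔
      ∀ i, r i = (∏ i, r i) ^ ((1 : ℝ) / n)) := by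
  have hs : (0:ℝ) < Real.sqrt (2 * Real.pi) := Real.sqrt_pos.mpr (by positivity)
  have hd0 : (0:ℝ) < (d : ℝ) := by exact_mod_cast Nat.lt_of_lt_of_le Nat.zero_lt_one hd
  set α : ℝ := Real.sqrt (2 * Real.pi) / (2 * (d : ℝ)) with hαdef
  have hα : 0 < α := by positivity
  -- rα is positive
  have hrα : 0 < rα := by
    rcases hr0.eq_or_lt with h | h
    · exfalso
      rw [← h] at hrz
      simp [f] at hrz
      exact absurd hrz (by positivity)
    · exact h
  set x₀ : ℝ := Real.log (2 * σ * rα) with hx₀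
  have hSC : StrictConcaveOn ℝ (Set.Ici x₀) (F σ α) := F_strictConcave hσ hα hrα hrz
  set p : Fin n → ℝ := fun i => Real.log (r i) with hpdef
  have h2σr : 0 < 2 * σ * rα := by positivity
  have hmem : ∀ i ∈ Finset.univ, p i ∈ Set.Ici x₀ := fun i _ =>
    Real.log_le_log h2σr (hmin i)
  set w : Fin n → ℝ := fun _ => 1 / (n : ℝ) with hwdef
  have hn0 : (0:ℝ) < (n : ℝ) := by exact_mod_cast hn
  have hw0 : ∀ i ∈ Finset.univ, (0:ℝ) < w i := fun i _ => by positivity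
  have hw1 : ∑ i : Fin n, w i = 1 := by
    simp [hwdef, Finset.sum_const, Finset.card_univ]
    field_simp
  have hprodpos : 0 < ∏ i, r i := Finset.prod_pos (fun i _ => hr i)
  set γ : ℝ := (∏ i, r i) ^ ((1 : ℝ) / n) with hγdef
  have hγpos : 0 < γ := Real.rpow_pos_of_pos hprodpos _
  have hcenter : ∑ i, w i • p i = Real.log γ := by
    rw [hγdef, Real.log_rpow hprodpos, Real.log_prod (fun i _ => (hr i).ne'),
      Finset.mul_sum]
    simp [hwdef, hpdef, smul_eq_mul]
  set C : ℝ := (d : ℝ) / ((d : ℝ) + 1) * (2 / Real.sqrt (2 * Real.pi)) with hCdef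
  have hCpos : 0 < C := by positivity
  -- rewrite both sides
  have hLHS : ∏ i, (1 / ((d : ℝ) + 1) + (d : ℝ) / ((d : ℝ) + 1) * phi σ (r i)) =
      C ^ n * Real.exp (∑ i, F σ α (p i)) := by
    rw [Finset.prod_congr rfl (fun i _ => psi_eq hσ d hd (hr i)), Finset.prod_mul_distrib,
      Finset.prod_const, Finset.card_univ, Fintype.card_fin, ← Real.exp_sum]
  have hRHS : (1 / ((d : ℝ) + 1) + (d : ℝ) / ((d : ℝ) + 1) * phi σ γ) ^ n =
      C ^ n * Real.exp ((n : ℝ) * F σ α (Real.log γ)) := by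
    rw [psi_eq hσ d hd hγpos, mul_pow, Real.exp_nat_mul]
  -- Jensen
  have hJ : ∑ i, w i • F σ α (p i) ≤ F σ α (Real.log γ) := by
    rw [← hcenter]
    exact hSC.concaveOn.le_map_sum (fun i hi => (hw0 i hi).le) hw1 hmem
  have hsum_eq : ∑ i, w i • F σ α (p i) = (1 / (n : ℝ)) * ∑ i, F σ α (p i) := by
    rw [Finset.mul_sum]
    simp [hwdef, smul_eq_mul]
  have hineq : ∑ i, F σ α (p i) ≤ (n : ℝ) * F σ α (Real.log γ) := by
    rw [hsum_eq] at hJ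
    calc ∑ i, F σ α (p i) = (n : ℝ) * ((1 / (n : ℝ)) * ∑ i, F σ α (p i)) := by
          field_simp
      _ ≤ (n : ℝ) * F σ α (Real.log γ) := by
          exact mul_le_mul_of_nonneg_left hJ hn0.le
  constructor
  · rw [hLHS, hRHS]
    exact mul_le_mul_of_nonneg_left (Real.exp_le_exp.mpr hineq) (by positivity)
  · rw [hLHS, hRHS]
    constructor
    · intro h
      have hexp : Real.exp (∑ i, F σ α (p i)) = Real.exp ((n : ℝ) * F σ α (Real.log γ)) :=
        mul_left_cancel₀ (by positivity : (C:ℝ) ^ n ≠ 0) h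
      have hSeq : ∑ i, F σ α (p i) = (n : ℝ) * F σ α (Real.log γ) := Real.exp_injective hexp
      have hjeq : F σ α (∑ i, w i • p i) = ∑ i, w i • F σ α (p i) := by
        rw [hcenter, hsum_eq, hSeq]
        field_simp
      have := (hSC.map_sum_eq_iff hw0 hw1 hmem).mp hjeq
      intro i
      have hpi : p i = Real.log γ := by
        have := this i (Finset.mem_univ i)
        rwa [hcenter] at this
      have : Real.exp (p i) = Real.exp (Real.log γ) := by rw [hpi]
      rwa [hpdef, Real.exp_log (hr i), Real.exp_log hγpos] at this
    · intro h
      have : ∀ i, F σ α (p i) = F σ α (Real.log γ) := fun i => by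
        rw [hpdef]; simp only []; rw [h i]
      rw [Finset.sum_congr rfl (fun i _ => this i), Finset.sum_const, Finset.card_univ,
        Fintype.card_fin, nsmul_eq_mul]
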